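/- (Higher-order chain rule via the polynomials A_{s,u}.) Let U, V ⊆ ℂ be open, let h : ℂ → ℂ be analytic on U with h(U) ⊆ V, and let g : ℂ → ℂ be analytic on V. Then for every integer s ≥ 0 and every z ∈ U, the s-th derivative of the composition g'∘h satisfies (g'∘h)^{(s)}(z) = Σ_{u=0}^{s} g^{(u+1)}(h(z)) · A_{s,u}(h'(z), h''(z), …, h^{(s)}(z)), where A_{s,u} is evaluated by substituting X_q ↦ h^{(q+1)}(z) for 0 ≤ q ≤ s−1 (and A_{0,0} evaluates to 1). -/

import Mathlib

/-- The polynomials `A_{s,u} ∈ ℤ[X₀, …, X_s]` defined by `A_{0,0} = 1`,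
`A_{0,u} = 0` for `u ≠ 0`, and inductively
`A_{s,u} = A_{s-1,u-1} · X₀ + ∑_{q=0}^{s-1} (∂_{X_q} A_{s-1,u}) · X_{q+1}`,
with the conventions `A_{s,-1} = 0` and `A_{s-1,s} = 0`. -/
noncomputable def chainRulePoly : ℕ → ℕ → MvPolynomial ℕ ℤ
  | 0, u => if u = 0 then 1 else 0
  | s + 1, u =>
      (if u = 0 then 0 else chainRulePoly s (u - 1)) * MvPolynomial.X 0 +
        ∑ q ∈ Finset.range (s + 1),
          MvPolynomial.pderiv q (chainRulePoly s u) * MvPolynomial.X (q + 1)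

open MvPolynomial in
/-- The variables of `pderiv i P` are among those of `P`. -/
lemma aux_vars_pderiv (i : ℕ) (P : MvPolynomial ℕ ℤ) :
    (MvPolynomial.pderiv i P).vars ⊆ P.vars := by
  conv_lhs => rw [P.as_sum, map_sum]
  refine (vars_sum_subset _ _).trans ?_
  intro j hj
  rw [Finset.mem_biUnion] at hj
  obtain ⟨d, hd, hj⟩ := hj
  rw [pderiv_monomial] at hj
  have hmem : j ∈ (d - Finsupp.single i 1).support := by
    by_cases hb : (MvPolynomial.coeff d P * (d i : ℤ)) = 0
    · rw [hb] at hj; simp at hj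
    · rwa [vars_monomial hb] at hj
  have hjd : j ∈ d.support := by
    rw [Finsupp.mem_support_iff] at hmem ⊢
    intro h0
    exact hmem (by simp [Finsupp.tsub_apply, h0])
  exact (mem_vars j).2 ⟨d, hd, hjd⟩

open MvPolynomial in
lemma aux_vars_chainRulePoly : ∀ s u : ℕ, (chainRulePoly s u).vars ⊆ Finset.range s := by
  intro s
  induction s with
  | zero =>
      intro u
      simp only [chainRulePoly]
      split_ifs <;> simp [vars_C]
  | succ s ih =>
      intro u
      simp only [chainRulePoly]
      refine (vars_add_subset _ _).trans (Finset.union_subset ?_ ?_)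
      · refine (vars_mul _ _).trans (Finset.union_subset ?_ ?_)
        · split_ifs
          · simp
          · exact (ih _).trans (Finset.range_subset_range.2 (Nat.le_succ s))
        · rw [vars_X]
          intro j hj
          simp only [Finset.mem_singleton] at hj
          simp [hj]
      · refine (vars_sum_subset _ _).trans ?_
        intro j hj
        rw [Finset.mem_biUnion] at hj
        obtain ⟨q, hq, hj⟩ := hj
        rw [Finset.mem_range] at hq
        by_cases hqs : q < s
        · have := (vars_mul _ _) hj
          rw [Finset.mem_union] at this
          rcases this with h | h
          · have := (aux_vars_pderiv q _ |>.trans (ih u)) h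
            rw [Finset.mem_range] at this ⊢
            omega
          · rw [vars_X, Finset.mem_singleton] at h
            rw [h, Finset.mem_range]
            omega
        · have hq' : q = s := by omega
          have hz : MvPolynomial.pderiv q (chainRulePoly s u) = 0 := by
            apply pderiv_eq_zero_of_notMem_vars
            intro hmem
            have := (ih u) hmem
            rw [Finset.mem_range] at this
            omega
          rw [hz, zero_mul, vars_0] at hj
          exact absurd hj (Finset.notMem_empty j)

lemma aux_chainRulePoly_eq_zero : ∀ s u : ℕ, s < u → chainRulePoly s u = 0 := by
  intro s
  induction s with
  | zero =>
      intro u hu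
      simp only [chainRulePoly]
      rw [if_neg (by omega)]
  | succ s ih =>
      intro u hu
      simp only [chainRulePoly]
      rw [if_neg (by omega), ih (u - 1) (by omega), ih u (by omega)]
      simp

/-- If `S` and `T` both contain the variables of `P`, the sums agree. -/
lemma aux_sum_pderiv_superset (P : MvPolynomial ℕ ℤ) (x : ℕ → ℂ) (c : ℕ → ℂ)
    {S T : Finset ℕ} (hS : P.vars ⊆ S) (hT : P.vars ⊆ T) :
    ∑ q ∈ S, MvPolynomial.aeval x (MvPolynomial.pderiv q P) * c q
      = ∑ q ∈ T, MvPolynomial.aeval x (MvPolynomial.pderiv q P) * c q := by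
  have key : ∀ q ∈ S ∪ T, q ∉ P.vars →
      MvPolynomial.aeval x (MvPolynomial.pderiv q P) * c q = 0 := by
    intro q _ hq
    rw [MvPolynomial.pderiv_eq_zero_of_notMem_vars hq, map_zero, zero_mul]
  rw [Finset.sum_subset Finset.subset_union_left
      (fun q hq hq' => key q hq (fun hv => hq' (hS hv))),
    Finset.sum_subset Finset.subset_union_right
      (fun q hq hq' => key q hq (fun hv => hq' (hT hv)))]

/-- Derivative of the evaluation of a multivariate polynomial along differentiable paths. -/
lemma aux_hasDerivAt_aeval (f : ℕ → ℂ → ℂ) (f' : ℕ → ℂ) (z : ℂ)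
    (hf : ∀ q, HasDerivAt (f q) (f' q) z) :
    ∀ (P : MvPolynomial ℕ ℤ) (S : Finset ℕ), P.vars ⊆ S →
      HasDerivAt (fun w => MvPolynomial.aeval (fun q => f q w) P)
        (∑ q ∈ S, MvPolynomial.aeval (fun q => f q z) (MvPolynomial.pderiv q P) * f' q) z := by
  intro P
  induction P using MvPolynomial.induction_on with
  | C a =>
      intro S _
      simp only [MvPolynomial.aeval_C, MvPolynomial.pderiv_C, map_zero, zero_mul,
        Finset.sum_const_zero]
      exact hasDerivAt_const z _
  | add p q ihp ihq =>
      intro S hS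
      set T : Finset ℕ := S ∪ p.vars ∪ q.vars with hT
      have hpT : p.vars ⊆ T := by intro x hx; simp [hT, hx]
      have hqT : q.vars ⊆ T := by intro x hx; simp [hT, hx]
      have hST : S ⊆ T := by intro x hx; simp [hT, hx]
      rw [aux_sum_pderiv_superset (p + q) _ _ hS (hS.trans hST)]
      have H := (ihp T hpT).add (ihq T hqT)
      have hfun : (fun w => MvPolynomial.aeval (fun q => f q w) (p + q))
          = fun w => MvPolynomial.aeval (fun q => f q w) p
              + MvPolynomial.aeval (fun q => f q w) q := by
        funext w; rw [map_add]
      rw [hfun]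
      have hsum : ∑ r ∈ T, MvPolynomial.aeval (fun q => f q z)
            (MvPolynomial.pderiv r (p + q)) * f' r
          = (∑ r ∈ T, MvPolynomial.aeval (fun q => f q z) (MvPolynomial.pderiv r p) * f' r)
            + ∑ r ∈ T, MvPolynomial.aeval (fun q => f q z) (MvPolynomial.pderiv r q) * f' r := by
        rw [← Finset.sum_add_distrib]
        exact Finset.sum_congr rfl fun r _ => by rw [map_add, map_add, add_mul]
      rw [hsum]
      exact H
  | mul_X p n ih =>
      intro S hS
      set T : Finset ℕ := S ∪ p.vars ∪ {n} with hT
      have hpT : p.vars ⊆ T := by intro x hx; simp [hT, hx]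
      have hST : S ⊆ T := by intro x hx; simp [hT, hx]
      have hnT : n ∈ T := by simp [hT]
      rw [aux_sum_pderiv_superset (p * MvPolynomial.X n) _ _ hS (hS.trans hST)]
      have H := (ih T hpT).mul (hf n)
      have hfun : (fun w => MvPolynomial.aeval (fun q => f q w) (p * MvPolynomial.X n))
          = fun w => MvPolynomial.aeval (fun q => f q w) p * f n w := by
        funext w; rw [map_mul, MvPolynomial.aeval_X]
      rw [hfun]
      have hsum : ∑ r ∈ T, MvPolynomial.aeval (fun q => f q z)
            (MvPolynomial.pderiv r (p * MvPolynomial.X n)) * f' r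
          = (∑ r ∈ T, MvPolynomial.aeval (fun q => f q z) (MvPolynomial.pderiv r p) * f' r)
              * f n z
            + MvPolynomial.aeval (fun q => f q z) p * f' n := by
        have step : ∀ r, MvPolynomial.aeval (fun q => f q z)
              (MvPolynomial.pderiv r (p * MvPolynomial.X n)) * f' r
            = MvPolynomial.aeval (fun q => f q z) (MvPolynomial.pderiv r p) * f' r * f n z
              + (if n = r then MvPolynomial.aeval (fun q => f q z) p * f' r else 0) := by
          intro r
          rw [MvPolynomial.pderiv_mul, map_add, map_mul, map_mul, MvPolynomial.aeval_X]
          by_cases hr : n = r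
          · subst hr
            rw [MvPolynomial.pderiv_X_self, map_one, if_pos rfl]
            ring
          · rw [MvPolynomial.pderiv_X_of_ne hr, map_zero, if_neg hr]
            ring
        rw [Finset.sum_congr rfl fun r _ => step r, Finset.sum_add_distrib,
          Finset.sum_ite_eq T n (fun r => MvPolynomial.aeval (fun q => f q z) p * f' r),
          if_pos hnT, ← Finset.sum_mul]
      rw [hsum]
      exact H

lemma aux_hasDerivAt_iteratedDeriv {f : ℂ → ℂ} {U : Set ℂ} (hU : IsOpen U)
    (hf : DifferentiableOn ℂ f U) (n : ℕ) {z : ℂ} (hz : z ∈ U) :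
    HasDerivAt (iteratedDeriv n f) (iteratedDeriv (n + 1) f z) z := by
  have hA : ∀ m : ℕ, AnalyticOnNhd ℂ (iteratedDeriv m f) U := by
    intro m
    induction m with
    | zero => simpa [iteratedDeriv_zero] using hf.analyticOnNhd hU
    | succ m ih => rw [iteratedDeriv_succ]; exact ih.deriv
  rw [iteratedDeriv_succ]
  exact ((hA n) z hz).differentiableAt.hasDerivAt

/-- Higher-order chain rule for `g' ∘ h` via the polynomials `A_{s,u}`:
`(g' ∘ h)^{(s)}(z) = ∑_{u=0}^{s} g^{(u+1)}(h z) · A_{s,u}(h'(z), …, h^{(s)}(z))`,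
where `X_q ↦ h^{(q+1)}(z)`. -/
theorem iteratedDeriv_deriv_comp_eq_sum_chainRulePoly
    (U V : Set ℂ) (hU : IsOpen U) (hV : IsOpen V)
    (h g : ℂ → ℂ) (hh : DifferentiableOn ℂ h U) (hmaps : Set.MapsTo h U V)
    (hg : DifferentiableOn ℂ g V) :
    ∀ s : ℕ, ∀ z ∈ U,
      iteratedDeriv s (fun w => deriv g (h w)) z =
        ∑ u ∈ Finset.range (s + 1),
          iteratedDeriv (u + 1) g (h z) *
            MvPolynomial.aeval (fun q : ℕ => iteratedDeriv (q + 1) h z)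
              (chainRulePoly s u) := by
  intro s
  induction s with
  | zero =>
      intro z hz
      have h00 : chainRulePoly 0 0 = 1 := by simp [chainRulePoly]
      simp [iteratedDeriv_zero, iteratedDeriv_one, h00]
  | succ s ih =>
      intro z hz
      set x : ℕ → ℂ := fun q : ℕ => iteratedDeriv (q + 1) h z with hx
      -- the right-hand side function for step s
      set R : ℂ → ℂ := fun w => ∑ u ∈ Finset.range (s + 1),
          iteratedDeriv (u + 1) g (h w) *
            MvPolynomial.aeval (fun q : ℕ => iteratedDeriv (q + 1) h w)
              (chainRulePoly s u) with hR
      have heq : (iteratedDeriv s (fun w => deriv g (h w))) =ᶠ[nhds z] R :=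
        Filter.eventuallyEq_of_mem (hU.mem_nhds hz) fun w hw => ih w hw
      rw [iteratedDeriv_succ, heq.deriv_eq]
      -- derivative of each summand
      have hder_h : ∀ q : ℕ, HasDerivAt (fun w => iteratedDeriv (q + 1) h w)
          (iteratedDeriv (q + 2) h z) z := fun q =>
        aux_hasDerivAt_iteratedDeriv hU hh (q + 1) hz
      have hderR : HasDerivAt R
          (∑ u ∈ Finset.range (s + 1),
            (iteratedDeriv (u + 2) g (h z) * iteratedDeriv 1 h z *
                MvPolynomial.aeval x (chainRulePoly s u)
              + iteratedDeriv (u + 1) g (h z) *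
                ∑ q ∈ Finset.range (s + 1),
                  MvPolynomial.aeval x (MvPolynomial.pderiv q (chainRulePoly s u)) *
                    iteratedDeriv (q + 2) h z)) z := by
        apply HasDerivAt.fun_sum
        intro u _
        have hG : HasDerivAt (fun w => iteratedDeriv (u + 1) g (h w))
            (iteratedDeriv (u + 2) g (h z) * iteratedDeriv 1 h z) z := by
          have hh' : HasDerivAt h (iteratedDeriv 1 h z) z := by
            have := aux_hasDerivAt_iteratedDeriv hU hh 0 hz
            rwa [iteratedDeriv_zero] at this
          have hg' : HasDerivAt (iteratedDeriv (u + 1) g)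
              (iteratedDeriv (u + 2) g (h z)) (h z) :=
            aux_hasDerivAt_iteratedDeriv hV hg (u + 1) (hmaps hz)
          exact hg'.comp z hh'
        have hP : HasDerivAt
            (fun w => MvPolynomial.aeval (fun q : ℕ => iteratedDeriv (q + 1) h w)
              (chainRulePoly s u))
            (∑ q ∈ Finset.range (s + 1),
              MvPolynomial.aeval x (MvPolynomial.pderiv q (chainRulePoly s u)) *
                iteratedDeriv (q + 2) h z) z :=
          aux_hasDerivAt_aeval (fun q w => iteratedDeriv (q + 1) h w)
            (fun q => iteratedDeriv (q + 2) h z) z hder_h (chainRulePoly s u)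
            (Finset.range (s + 1))
            ((aux_vars_chainRulePoly s u).trans (Finset.range_subset_range.2 (Nat.le_succ s)))
        exact hG.mul hP
      rw [hderR.deriv]
      -- now pure algebra: match with the sum over `range (s + 2)`
      have haeval : ∀ u : ℕ, MvPolynomial.aeval x (chainRulePoly (s + 1) u)
          = (if u = 0 then 0 else MvPolynomial.aeval x (chainRulePoly s (u - 1))) * x 0
            + ∑ q ∈ Finset.range (s + 1),
                MvPolynomial.aeval x (MvPolynomial.pderiv q (chainRulePoly s u)) * x (q + 1) := by
        intro u
        conv_lhs => rw [chainRulePoly]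
        rw [map_add, map_mul, map_sum, MvPolynomial.aeval_X, apply_ite (MvPolynomial.aeval x),
          map_zero]
        congr 1
        exact Finset.sum_congr rfl fun q _ => by rw [map_mul, MvPolynomial.aeval_X]
      have hx0 : x 0 = iteratedDeriv 1 h z := rfl
      have hxq : ∀ q : ℕ, x (q + 1) = iteratedDeriv (q + 2) h z := fun q => rfl
      calc
        ∑ u ∈ Finset.range (s + 1),
            (iteratedDeriv (u + 2) g (h z) * iteratedDeriv 1 h z *
                MvPolynomial.aeval x (chainRulePoly s u)
              + iteratedDeriv (u + 1) g (h z) *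
                ∑ q ∈ Finset.range (s + 1),
                  MvPolynomial.aeval x (MvPolynomial.pderiv q (chainRulePoly s u)) *
                    iteratedDeriv (q + 2) h z)
          = (∑ u ∈ Finset.range (s + 1),
              iteratedDeriv (u + 2) g (h z) *
                (MvPolynomial.aeval x (chainRulePoly s u) * x 0))
            + ∑ u ∈ Finset.range (s + 1),
                iteratedDeriv (u + 1) g (h z) *
                  ∑ q ∈ Finset.range (s + 1),
                    MvPolynomial.aeval x (MvPolynomial.pderiv q (chainRulePoly s u)) *
                      x (q + 1) := by
            rw [← Finset.sum_add_distrib]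
            refine Finset.sum_congr rfl fun u _ => ?_
            rw [hx0]
            simp only [hxq]
            ring
        _ = ∑ u ∈ Finset.range (s + 2),
              iteratedDeriv (u + 1) g (h z) *
                MvPolynomial.aeval x (chainRulePoly (s + 1) u) := by
            have hzero : ∑ q ∈ Finset.range (s + 1),
                MvPolynomial.aeval x (MvPolynomial.pderiv q (chainRulePoly s (s + 1))) *
                  x (q + 1) = 0 := by
              rw [aux_chainRulePoly_eq_zero s (s + 1) (Nat.lt_succ_self s)]
              simp
            have hrw : ∑ u ∈ Finset.range (s + 2),
                iteratedDeriv (u + 1) g (h z) *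
                  MvPolynomial.aeval x (chainRulePoly (s + 1) u)
              = ∑ u ∈ Finset.range (s + 2),
                iteratedDeriv (u + 1) g (h z) *
                  ((if u = 0 then 0 else MvPolynomial.aeval x (chainRulePoly s (u - 1))) * x 0
                    + ∑ q ∈ Finset.range (s + 1),
                        MvPolynomial.aeval x (MvPolynomial.pderiv q (chainRulePoly s u)) *
                          x (q + 1)) :=
              Finset.sum_congr rfl fun u _ => by rw [haeval u]
            rw [hrw]
            simp only [mul_add, Finset.sum_add_distrib]
            congr 1
            · conv_rhs => rw [Finset.sum_range_succ']
              simp [Nat.add_sub_cancel]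
            · conv_rhs => rw [Finset.sum_range_succ]
              rw [hzero, mul_zero, add_zero]
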